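/- Let n ≥ 1, σ > 0, q(y|x) := exp(−‖y − x‖²/(2σ²)) for x, y ∈ ℝⁿ, and let P be a probability measure on ℝⁿ that is non-degenerate, i.e. P({x : ⟨x, v⟩ = d}) < 1 for every nonzero v ∈ ℝⁿ and every d ∈ ℝ. Then the conditional mean f_P(y) := (∫ x·q(y|x) dP(x)) / (∫ q(y|x) dP(x)) is an injective function of y ∈ ℝⁿ, and there exists a penalty φ_P : ℝⁿ → ℝ ∪ {+∞} such that for every y ∈ ℝⁿ, f_P(y) is the UNIQUE minimizer of x ↦ (1/2)‖y − x‖² + φ_P(x) over ℝⁿ. -/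

import Mathlib

open MeasureTheory RealInnerProductSpace

/-- The conditional mean (MMSE estimator) for additive white Gaussian denoising
with noise variance `σ²` and prior `P` on `ℝⁿ`. -/
noncomputable def gaussMean (n : ℕ) (σ : ℝ) (P : Measure (EuclideanSpace ℝ (Fin n)))
    (y : EuclideanSpace ℝ (Fin n)) : EuclideanSpace ℝ (Fin n) :=
  (∫ x, Real.exp (-‖y - x‖ ^ 2 / (2 * σ ^ 2)) ∂P)⁻¹ •
    ∫ x, Real.exp (-‖y - x‖ ^ 2 / (2 * σ ^ 2)) • x ∂P

namespace GaussAux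

variable {n : ℕ}

/-- The shifted Gaussian weight. -/
noncomputable def w (σ : ℝ) (y x : EuclideanSpace ℝ (Fin n)) : ℝ :=
  Real.exp ((⟪y, x⟫ - ‖x‖ ^ 2 / 2) / σ ^ 2)

lemma w_pos (σ : ℝ) (y x : EuclideanSpace ℝ (Fin n)) : 0 < w σ y x := Real.exp_pos _

lemma continuous_w_x (σ : ℝ) (y : EuclideanSpace ℝ (Fin n)) :
    Continuous (fun x : EuclideanSpace ℝ (Fin n) => w σ y x) := by
  apply Real.continuous_exp.comp
  exact ((continuous_const.inner continuous_id).sub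
    ((continuous_norm.pow 2).div_const 2)).div_const _

lemma continuous_w_y (σ : ℝ) (x : EuclideanSpace ℝ (Fin n)) :
    Continuous (fun y : EuclideanSpace ℝ (Fin n) => w σ y x) := by
  apply Real.continuous_exp.comp
  exact ((continuous_id.inner continuous_const).sub continuous_const).div_const _

lemma w_le {σ : ℝ} (hσ : 0 < σ) (y x : EuclideanSpace ℝ (Fin n)) :
    w σ y x ≤ Real.exp (‖y‖ ^ 2 / (2 * σ ^ 2)) := by
  apply Real.exp_le_exp.mpr
  have h1 : ⟪y, x⟫ ≤ ‖y‖ * ‖x‖ := real_inner_le_norm y x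
  have h2 : (0:ℝ) < σ ^ 2 := by positivity
  rw [div_le_div_iff₀ h2 (by positivity)]
  nlinarith [sq_nonneg (‖y‖ - ‖x‖), sq_nonneg (‖y‖ + ‖x‖)]

lemma w_mul_norm_le {σ : ℝ} (hσ : 0 < σ) (y x : EuclideanSpace ℝ (Fin n)) :
    w σ y x * ‖x‖ ≤ Real.exp ((‖y‖ + σ ^ 2) ^ 2 / (2 * σ ^ 2)) := by
  have h1 : ⟪y, x⟫ ≤ ‖y‖ * ‖x‖ := real_inner_le_norm y x
  have h2 : (0:ℝ) < σ ^ 2 := by positivity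
  have hx : ‖x‖ ≤ Real.exp ‖x‖ := by
    have := Real.add_one_le_exp ‖x‖; linarith
  calc w σ y x * ‖x‖ ≤ w σ y x * Real.exp ‖x‖ :=
        mul_le_mul_of_nonneg_left hx (w_pos σ y x).le
    _ = Real.exp ((⟪y, x⟫ - ‖x‖ ^ 2 / 2) / σ ^ 2 + ‖x‖) := (Real.exp_add _ _).symm
    _ ≤ Real.exp ((‖y‖ + σ ^ 2) ^ 2 / (2 * σ ^ 2)) := by
        apply Real.exp_le_exp.mpr
        rw [div_add' _ _ _ h2.ne', div_le_div_iff₀ h2 (by positivity)]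
        nlinarith [sq_nonneg (‖y‖ + σ ^ 2 - ‖x‖)]

variable (σ : ℝ) (P : Measure (EuclideanSpace ℝ (Fin n))) [IsProbabilityMeasure P]

/-- Normalization constant. -/
noncomputable def S (y : EuclideanSpace ℝ (Fin n)) : ℝ := ∫ x, w σ y x ∂P

/-- Unnormalized mean. -/
noncomputable def M (y : EuclideanSpace ℝ (Fin n)) : EuclideanSpace ℝ (Fin n) :=
  ∫ x, w σ y x • x ∂P

/-- Normalized mean. -/
noncomputable def fP (y : EuclideanSpace ℝ (Fin n)) : EuclideanSpace ℝ (Fin n) :=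
  (S σ P y)⁻¹ • M σ P y

lemma integrable_of_bound {V : Type*} [NormedAddCommGroup V]
    {F : EuclideanSpace ℝ (Fin n) → V} (hF : AEStronglyMeasurable F P) (C : ℝ)
    (h : ∀ x, ‖F x‖ ≤ C) : Integrable F P :=
  (integrable_const C).mono' hF (Filter.Eventually.of_forall h)

lemma integrable_w {σ : ℝ} (hσ : 0 < σ) (y : EuclideanSpace ℝ (Fin n)) :
    Integrable (fun x => w σ y x) P := by
  refine integrable_of_bound P (continuous_w_x σ y).aestronglyMeasurable
    (Real.exp (‖y‖ ^ 2 / (2 * σ ^ 2))) fun x => ?_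
  rw [Real.norm_eq_abs, abs_of_pos (w_pos σ y x)]
  exact w_le hσ y x

lemma integrable_w_smul {σ : ℝ} (hσ : 0 < σ) (y : EuclideanSpace ℝ (Fin n)) :
    Integrable (fun x => w σ y x • x) P := by
  refine integrable_of_bound P ((continuous_w_x σ y).smul continuous_id).aestronglyMeasurable
    (Real.exp ((‖y‖ + σ ^ 2) ^ 2 / (2 * σ ^ 2))) fun x => ?_
  rw [norm_smul, Real.norm_eq_abs, abs_of_pos (w_pos σ y x)]
  exact w_mul_norm_le hσ y x

lemma integrable_w_inner {σ : ℝ} (hσ : 0 < σ) (y u : EuclideanSpace ℝ (Fin n)) :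
    Integrable (fun x => w σ y x * ⟪u, x⟫) P := by
  refine integrable_of_bound P
    (((continuous_w_x σ y).mul (continuous_const.inner continuous_id)).aestronglyMeasurable)
    (Real.exp ((‖y‖ + σ ^ 2) ^ 2 / (2 * σ ^ 2)) * ‖u‖) fun x => ?_
  rw [Real.norm_eq_abs, abs_mul, abs_of_pos (w_pos σ y x)]
  calc w σ y x * |⟪u, x⟫| ≤ w σ y x * (‖u‖ * ‖x‖) :=
        mul_le_mul_of_nonneg_left (abs_real_inner_le_norm u x) (w_pos σ y x).le
    _ = (w σ y x * ‖x‖) * ‖u‖ := by ring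
    _ ≤ Real.exp ((‖y‖ + σ ^ 2) ^ 2 / (2 * σ ^ 2)) * ‖u‖ :=
        mul_le_mul_of_nonneg_right (w_mul_norm_le hσ y x) (norm_nonneg u)

lemma S_pos {σ : ℝ} (hσ : 0 < σ) (y : EuclideanSpace ℝ (Fin n)) : 0 < S σ P y := by
  rw [S, integral_pos_iff_support_of_nonneg (fun x => (w_pos σ y x).le) (integrable_w P hσ y)]
  have : Function.support (fun x => w σ y x) = Set.univ :=
    Set.eq_univ_of_forall fun x => (w_pos σ y x).ne'
  rw [this]
  simp

lemma gaussMean_eq {σ : ℝ} (hσ : 0 < σ) (y : EuclideanSpace ℝ (Fin n)) :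
    gaussMean n σ P y = fP σ P y := by
  have key : ∀ x : EuclideanSpace ℝ (Fin n),
      Real.exp (-‖y - x‖ ^ 2 / (2 * σ ^ 2)) = Real.exp (-‖y‖ ^ 2 / (2 * σ ^ 2)) * w σ y x := by
    intro x
    rw [w, ← Real.exp_add]
    congr 1
    have hn : ‖y - x‖ ^ 2 = ‖y‖ ^ 2 - 2 * ⟪y, x⟫ + ‖x‖ ^ 2 := norm_sub_sq_real y x
    have h2 : (σ:ℝ) ^ 2 ≠ 0 := by positivity
    rw [hn]
    field_simp
    ring
  set c := Real.exp (-‖y‖ ^ 2 / (2 * σ ^ 2)) with hc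
  have hcpos : 0 < c := Real.exp_pos _
  have h1 : (∫ x, Real.exp (-‖y - x‖ ^ 2 / (2 * σ ^ 2)) ∂P) = c * S σ P y := by
    simp_rw [key]; rw [S, integral_const_mul]
  have h2 : (∫ x, Real.exp (-‖y - x‖ ^ 2 / (2 * σ ^ 2)) • x ∂P) = c • M σ P y := by
    simp_rw [key, mul_smul]; rw [M, integral_smul]
  rw [gaussMean, h1, h2, fP, smul_smul, mul_inv]
  congr 1
  rw [mul_assoc, mul_comm (S σ P y)⁻¹ c, ← mul_assoc, inv_mul_cancel₀ hcpos.ne', one_mul]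

lemma inner_M {σ : ℝ} (hσ : 0 < σ) (y u : EuclideanSpace ℝ (Fin n)) :
    ⟪u, M σ P y⟫ = ∫ x, w σ y x * ⟪u, x⟫ ∂P := by
  rw [M, ← integral_inner (integrable_w_smul P hσ y) u]
  congr 1
  ext x
  rw [real_inner_smul_right]

lemma w_shift (σ : ℝ) (y u x : EuclideanSpace ℝ (Fin n)) (hσ : 0 < σ) :
    w σ (y + u) x = w σ y x * Real.exp (⟪u, x⟫ / σ ^ 2) := by
  rw [w, w, ← Real.exp_add]
  congr 1
  have h2 : (σ:ℝ) ^ 2 ≠ 0 := by positivity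
  rw [inner_add_left]
  field_simp
  ring

lemma aux_nonneg {s : ℝ} (hs : 0 < s) (a b c : ℝ) (hc : 0 ≤ c) :
    0 ≤ (a - b) * (c * (Real.exp (a / s) - Real.exp (b / s))) := by
  rcases le_total a b with h | h
  · have he : Real.exp (a / s) ≤ Real.exp (b / s) :=
      Real.exp_le_exp.mpr ((div_le_div_iff_of_pos_right hs).mpr h)
    have h1 : 0 ≤ (b - a) * (c * (Real.exp (b / s) - Real.exp (a / s))) :=
      mul_nonneg (by linarith) (mul_nonneg hc (by linarith))
    nlinarith [h1]
  · have he : Real.exp (b / s) ≤ Real.exp (a / s) :=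
      Real.exp_le_exp.mpr ((div_le_div_iff_of_pos_right hs).mpr h)
    exact mul_nonneg (by linarith) (mul_nonneg hc (by linarith))

lemma aux_eq {s : ℝ} (hs : 0 < s) {a b c : ℝ} (hc : 0 < c)
    (h : (a - b) * (c * (Real.exp (a / s) - Real.exp (b / s))) = 0) : a = b := by
  by_contra hab
  rcases lt_or_gt_of_ne hab with h' | h'
  · have he : Real.exp (a / s) < Real.exp (b / s) :=
      Real.exp_lt_exp.mpr ((div_lt_div_iff_of_pos_right hs).mpr h')
    have h1 : 0 < (b - a) * (c * (Real.exp (b / s) - Real.exp (a / s))) :=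
      mul_pos (by linarith) (mul_pos hc (by linarith))
    nlinarith [h1]
  · have he : Real.exp (b / s) < Real.exp (a / s) :=
      Real.exp_lt_exp.mpr ((div_lt_div_iff_of_pos_right hs).mpr h')
    have h1 : 0 < (a - b) * (c * (Real.exp (a / s) - Real.exp (b / s))) :=
      mul_pos (by linarith) (mul_pos hc (by linarith))
    nlinarith [h1]

lemma D_pos {σ : ℝ} (hσ : 0 < σ)
    (hnd : ∀ v : EuclideanSpace ℝ (Fin n), v ≠ 0 → ∀ d : ℝ, P {x | ⟪x, v⟫ = d} < 1)
    {y z : EuclideanSpace ℝ (Fin n)} (hyz : y ≠ z) :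
    0 < (∫ x, w σ z x * ⟪z - y, x⟫ ∂P) * S σ P y
        - (∫ x, w σ y x * ⟪z - y, x⟫ ∂P) * S σ P z := by
  set u := z - y with hu
  have hu0 : u ≠ 0 := sub_ne_zero.mpr (Ne.symm hyz)
  have hs2 : (0:ℝ) < σ ^ 2 := by positivity
  -- the symmetrized integrand
  set Φ : EuclideanSpace ℝ (Fin n) × EuclideanSpace ℝ (Fin n) → ℝ :=
    fun p => (⟪u, p.1⟫ - ⟪u, p.2⟫)
      * (w σ z p.1 * w σ y p.2 - w σ y p.1 * w σ z p.2) with hΦ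
  have hw : ∀ x, w σ z x = w σ y x * Real.exp (⟪u, x⟫ / σ ^ 2) := by
    intro x
    rw [← w_shift σ y u x hσ, hu, add_comm, sub_add_cancel]
  have i1 : Integrable (fun p : EuclideanSpace ℝ (Fin n) × EuclideanSpace ℝ (Fin n) =>
      (w σ z p.1 * ⟪u, p.1⟫) * w σ y p.2) (P.prod P) :=
    (integrable_w_inner P hσ z u).mul_prod (integrable_w P hσ y)
  have i2 : Integrable (fun p : EuclideanSpace ℝ (Fin n) × EuclideanSpace ℝ (Fin n) =>
      (w σ y p.1 * ⟪u, p.1⟫) * w σ z p.2) (P.prod P) :=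
    (integrable_w_inner P hσ y u).mul_prod (integrable_w P hσ z)
  have i3 : Integrable (fun p : EuclideanSpace ℝ (Fin n) × EuclideanSpace ℝ (Fin n) =>
      w σ z p.1 * (w σ y p.2 * ⟪u, p.2⟫)) (P.prod P) :=
    (integrable_w P hσ z).mul_prod (integrable_w_inner P hσ y u)
  have i4 : Integrable (fun p : EuclideanSpace ℝ (Fin n) × EuclideanSpace ℝ (Fin n) =>
      w σ y p.1 * (w σ z p.2 * ⟪u, p.2⟫)) (P.prod P) :=
    (integrable_w P hσ y).mul_prod (integrable_w_inner P hσ z u)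
  have hΦeq : Φ = fun p => ((w σ z p.1 * ⟪u, p.1⟫) * w σ y p.2
      - (w σ y p.1 * ⟪u, p.1⟫) * w σ z p.2)
      - w σ z p.1 * (w σ y p.2 * ⟪u, p.2⟫) + w σ y p.1 * (w σ z p.2 * ⟪u, p.2⟫) := by
    funext p; rw [hΦ]; ring
  have i12 : Integrable (fun p : EuclideanSpace ℝ (Fin n) × EuclideanSpace ℝ (Fin n) =>
      (w σ z p.1 * ⟪u, p.1⟫) * w σ y p.2 - (w σ y p.1 * ⟪u, p.1⟫) * w σ z p.2) (P.prod P) :=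
    i1.sub i2
  have i123 : Integrable (fun p : EuclideanSpace ℝ (Fin n) × EuclideanSpace ℝ (Fin n) =>
      (w σ z p.1 * ⟪u, p.1⟫) * w σ y p.2 - (w σ y p.1 * ⟪u, p.1⟫) * w σ z p.2
      - w σ z p.1 * (w σ y p.2 * ⟪u, p.2⟫)) (P.prod P) := i12.sub i3
  have hΦint : Integrable Φ (P.prod P) := by
    rw [hΦeq]; exact i123.add i4
  have hΦval : ∫ p, Φ p ∂(P.prod P)
      = 2 * ((∫ x, w σ z x * ⟪u, x⟫ ∂P) * S σ P y
        - (∫ x, w σ y x * ⟪u, x⟫ ∂P) * S σ P z) := by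
    rw [hΦeq]
    rw [integral_add i123 i4, integral_sub i12 i3, integral_sub i1 i2]
    have e1 : ∫ p : EuclideanSpace ℝ (Fin n) × EuclideanSpace ℝ (Fin n),
        (w σ z p.1 * ⟪u, p.1⟫) * w σ y p.2 ∂(P.prod P)
        = (∫ x, w σ z x * ⟪u, x⟫ ∂P) * ∫ x, w σ y x ∂P :=
      integral_prod_mul (fun x => w σ z x * ⟪u, x⟫) (fun x => w σ y x)
    have e2 : ∫ p : EuclideanSpace ℝ (Fin n) × EuclideanSpace ℝ (Fin n),
        (w σ y p.1 * ⟪u, p.1⟫) * w σ z p.2 ∂(P.prod P)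
        = (∫ x, w σ y x * ⟪u, x⟫ ∂P) * ∫ x, w σ z x ∂P :=
      integral_prod_mul (fun x => w σ y x * ⟪u, x⟫) (fun x => w σ z x)
    have e3 : ∫ p : EuclideanSpace ℝ (Fin n) × EuclideanSpace ℝ (Fin n),
        w σ z p.1 * (w σ y p.2 * ⟪u, p.2⟫) ∂(P.prod P)
        = (∫ x, w σ z x ∂P) * ∫ x, w σ y x * ⟪u, x⟫ ∂P :=
      integral_prod_mul (fun x => w σ z x) (fun x => w σ y x * ⟪u, x⟫)
    have e4 : ∫ p : EuclideanSpace ℝ (Fin n) × EuclideanSpace ℝ (Fin n),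
        w σ y p.1 * (w σ z p.2 * ⟪u, p.2⟫) ∂(P.prod P)
        = (∫ x, w σ y x ∂P) * ∫ x, w σ z x * ⟪u, x⟫ ∂P :=
      integral_prod_mul (fun x => w σ y x) (fun x => w σ z x * ⟪u, x⟫)
    rw [e1, e2, e3, e4, S, S]
    ring
  have hΦnn : ∀ p, 0 ≤ Φ p := by
    intro p
    have heq : Φ p = (⟪u, p.1⟫ - ⟪u, p.2⟫) * ((w σ y p.1 * w σ y p.2)
        * (Real.exp (⟪u, p.1⟫ / σ ^ 2) - Real.exp (⟪u, p.2⟫ / σ ^ 2))) := by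
      simp only [hΦ, hw]; ring
    rw [heq]
    exact aux_nonneg hs2 _ _ _ (mul_nonneg (w_pos _ _ _).le (w_pos _ _ _).le)
  have hD0 : 0 ≤ (∫ x, w σ z x * ⟪u, x⟫ ∂P) * S σ P y
      - (∫ x, w σ y x * ⟪u, x⟫ ∂P) * S σ P z := by
    have h0 : (0:ℝ) ≤ ∫ p, Φ p ∂(P.prod P) := integral_nonneg hΦnn
    rw [hΦval] at h0; linarith
  rcases hD0.lt_or_eq with h | h
  · exact h
  · -- equality case: contradiction with non-degeneracy
    exfalso
    have hInt0 : ∫ p, Φ p ∂(P.prod P) = 0 := by rw [hΦval, ← h]; ring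
    have hae : ∀ᵐ p ∂(P.prod P), Φ p = 0 := by
      have := (integral_eq_zero_iff_of_nonneg_ae (Filter.Eventually.of_forall hΦnn) hΦint).mp
        hInt0
      filter_upwards [this] with p hp using hp
    have hae2 : ∀ᵐ p ∂(P.prod P), ⟪u, p.1⟫ = ⟪u, p.2⟫ := by
      filter_upwards [hae] with p hp
      have hrw : Φ p = (⟪u, p.1⟫ - ⟪u, p.2⟫) * ((w σ y p.1 * w σ y p.2)
          * (Real.exp (⟪u, p.1⟫ / σ ^ 2) - Real.exp (⟪u, p.2⟫ / σ ^ 2))) := by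
        simp only [hΦ, hw]; ring
      rw [hrw] at hp
      exact aux_eq hs2 (mul_pos (w_pos _ _ _) (w_pos _ _ _)) hp
    set T : Set (EuclideanSpace ℝ (Fin n) × EuclideanSpace ℝ (Fin n)) :=
      {p | ⟪u, p.1⟫ = ⟪u, p.2⟫} with hT
    have hTm : MeasurableSet T := by
      apply measurableSet_eq_fun
      · exact (continuous_const.inner continuous_fst).measurable
      · exact (continuous_const.inner continuous_snd).measurable
    have hTc : (P.prod P) Tᶜ = 0 := by
      rw [hT, Set.compl_setOf]
      exact ae_iff.mp hae2
    rw [Measure.prod_apply hTm.compl] at hTc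
    have hmeas : Measurable (fun x => P (Prod.mk x ⁻¹' Tᶜ)) :=
      measurable_measure_prodMk_left hTm.compl
    have hae3 : ∀ᵐ x ∂P, P (Prod.mk x ⁻¹' Tᶜ) = 0 := by
      have := (lintegral_eq_zero_iff hmeas).mp hTc
      filter_upwards [this] with x hx using hx
    haveI : (ae P).NeBot := ae_neBot.mpr (IsProbabilityMeasure.ne_zero P)
    obtain ⟨x₀, hx₀⟩ := hae3.exists
    set d : ℝ := ⟪u, x₀⟫ with hd
    have hAm : MeasurableSet {x : EuclideanSpace ℝ (Fin n) | ⟪x, u⟫ = d} := by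
      apply measurableSet_eq_fun
      · exact (continuous_id.inner continuous_const).measurable
      · exact measurable_const
    have hset : Prod.mk x₀ ⁻¹' Tᶜ = {x : EuclideanSpace ℝ (Fin n) | ⟪x, u⟫ = d}ᶜ := by
      ext b
      simp only [Set.mem_preimage, Set.mem_compl_iff, Set.mem_setOf_eq, hT, hd]
      rw [real_inner_comm b u]
      tauto
    rw [hset] at hx₀
    have h1 : P {x : EuclideanSpace ℝ (Fin n) | ⟪x, u⟫ = d} = 1 :=
      (prob_compl_eq_zero_iff hAm).mp hx₀
    exact absurd h1 (hnd u hu0 d).ne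

lemma inner_fP {σ : ℝ} (hσ : 0 < σ) (y u : EuclideanSpace ℝ (Fin n)) :
    ⟪fP σ P y, u⟫ = (S σ P y)⁻¹ * ∫ x, w σ y x * ⟪u, x⟫ ∂P := by
  rw [fP, real_inner_smul_left, real_inner_comm, inner_M P hσ]

lemma strict_mono_fP {σ : ℝ} (hσ : 0 < σ)
    (hnd : ∀ v : EuclideanSpace ℝ (Fin n), v ≠ 0 → ∀ d : ℝ, P {x | ⟪x, v⟫ = d} < 1)
    {y z : EuclideanSpace ℝ (Fin n)} (hyz : y ≠ z) :
    0 < ⟪fP σ P z - fP σ P y, z - y⟫ := by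
  have hSy := S_pos P hσ y
  have hSz := S_pos P hσ z
  have hD := D_pos P hσ hnd hyz
  rw [inner_sub_left, inner_fP P hσ, inner_fP P hσ]
  set Iz := ∫ x, w σ z x * ⟪z - y, x⟫ ∂P
  set Iy := ∫ x, w σ y x * ⟪z - y, x⟫ ∂P
  have : (S σ P z)⁻¹ * Iz - (S σ P y)⁻¹ * Iy
      = (Iz * S σ P y - Iy * S σ P z) * ((S σ P z)⁻¹ * (S σ P y)⁻¹) := by
    field_simp
  rw [this]
  positivity

lemma key_ineq {σ : ℝ} (hσ : 0 < σ) (y z : EuclideanSpace ℝ (Fin n)) :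
    S σ P y * Real.exp (⟪fP σ P y, z - y⟫ / σ ^ 2) ≤ S σ P z := by
  set u := z - y with hu
  set m := ⟪fP σ P y, u⟫ with hm
  have hs2 : (0:ℝ) < σ ^ 2 := by positivity
  have hSy := S_pos P hσ y
  have hIw : ∫ x, w σ y x * ⟪u, x⟫ ∂P = m * S σ P y := by
    rw [hm, inner_fP P hσ]
    field_simp
  have hw : ∀ x, w σ z x = w σ y x * Real.exp (⟪u, x⟫ / σ ^ 2) := by
    intro x; rw [← w_shift σ y u x hσ, hu, add_comm, sub_add_cancel]
  have hpt : ∀ x, Real.exp (m / σ ^ 2)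
      * (w σ y x + (w σ y x * ⟪u, x⟫ - m * w σ y x) / σ ^ 2) ≤ w σ z x := by
    intro x
    have h1 : (⟪u, x⟫ - m) / σ ^ 2 + 1 ≤ Real.exp ((⟪u, x⟫ - m) / σ ^ 2) :=
      Real.add_one_le_exp _
    have h2 : Real.exp (⟪u, x⟫ / σ ^ 2)
        = Real.exp (m / σ ^ 2) * Real.exp ((⟪u, x⟫ - m) / σ ^ 2) := by
      rw [← Real.exp_add]; congr 1; field_simp; ring
    have hfact : Real.exp (m / σ ^ 2)
        * (w σ y x + (w σ y x * ⟪u, x⟫ - m * w σ y x) / σ ^ 2)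
        = (Real.exp (m / σ ^ 2) * w σ y x) * ((⟪u, x⟫ - m) / σ ^ 2 + 1) := by
      field_simp; ring
    rw [hw x, h2, hfact]
    calc (Real.exp (m / σ ^ 2) * w σ y x) * ((⟪u, x⟫ - m) / σ ^ 2 + 1)
        ≤ (Real.exp (m / σ ^ 2) * w σ y x) * Real.exp ((⟪u, x⟫ - m) / σ ^ 2) :=
          mul_le_mul_of_nonneg_left h1 (mul_pos (Real.exp_pos _) (w_pos σ y x)).le
      _ = w σ y x * (Real.exp (m / σ ^ 2) * Real.exp ((⟪u, x⟫ - m) / σ ^ 2)) := by ring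
  have hint2 : Integrable (fun x => (w σ y x * ⟪u, x⟫ - m * w σ y x) / σ ^ 2) P :=
    ((integrable_w_inner P hσ y u).sub ((integrable_w P hσ y).const_mul m)).div_const _
  have hint_rhs : Integrable (fun x => Real.exp (m / σ ^ 2)
      * (w σ y x + (w σ y x * ⟪u, x⟫ - m * w σ y x) / σ ^ 2)) P :=
    ((integrable_w P hσ y).add hint2).const_mul _
  have hle : ∫ x, Real.exp (m / σ ^ 2)
      * (w σ y x + (w σ y x * ⟪u, x⟫ - m * w σ y x) / σ ^ 2) ∂P ≤ S σ P z :=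
    integral_mono hint_rhs (integrable_w P hσ z) hpt
  have hval : ∫ x, Real.exp (m / σ ^ 2)
      * (w σ y x + (w σ y x * ⟪u, x⟫ - m * w σ y x) / σ ^ 2) ∂P
      = Real.exp (m / σ ^ 2) * S σ P y := by
    rw [integral_const_mul]
    congr 1
    rw [integral_add (integrable_w P hσ y) hint2, integral_div,
      integral_sub (integrable_w_inner P hσ y u) ((integrable_w P hσ y).const_mul m),
      integral_const_mul, hIw]
    show S σ P y + (m * S σ P y - m * S σ P y) / σ ^ 2 = S σ P y
    rw [sub_self, zero_div, add_zero]
  rw [mul_comm]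
  rw [hval] at hle
  exact hle

/-- The potential. -/
noncomputable def psi (σ : ℝ) (P : Measure (EuclideanSpace ℝ (Fin n)))
    (y : EuclideanSpace ℝ (Fin n)) : ℝ := σ ^ 2 * Real.log (S σ P y)

lemma subgrad {σ : ℝ} (hσ : 0 < σ) (y z : EuclideanSpace ℝ (Fin n)) :
    ⟪fP σ P y, z - y⟫ ≤ psi σ P z - psi σ P y := by
  have h := key_ineq P hσ y z
  have hSy := S_pos P hσ y
  have hSz := S_pos P hσ z
  have hs2 : (0:ℝ) < σ ^ 2 := by positivity
  have hlog : Real.log (S σ P y * Real.exp (⟪fP σ P y, z - y⟫ / σ ^ 2))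
      ≤ Real.log (S σ P z) := Real.log_le_log (by positivity) h
  rw [Real.log_mul hSy.ne' (Real.exp_pos _).ne', Real.log_exp] at hlog
  rw [psi, psi]
  have h2 := mul_le_mul_of_nonneg_left hlog hs2.le
  rw [mul_add, mul_div_cancel₀ _ hs2.ne'] at h2
  linarith

lemma continuous_S {σ : ℝ} (hσ : 0 < σ) : Continuous (S σ P) := by
  rw [continuous_iff_continuousAt]
  intro y₀
  apply continuousAt_of_dominated (bound := fun _ => Real.exp ((‖y₀‖ + 1) ^ 2 / (2 * σ ^ 2)))
  · exact Filter.Eventually.of_forall fun y => (continuous_w_x σ y).aestronglyMeasurable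
  · have hev : ∀ᶠ y' : EuclideanSpace ℝ (Fin n) in nhds y₀, ‖y'‖ < ‖y₀‖ + 1 :=
      (continuous_norm.continuousAt (x := y₀)).eventually_lt_const (by linarith)
    filter_upwards [hev] with y hy
    refine Filter.Eventually.of_forall fun x => ?_
    rw [Real.norm_eq_abs, abs_of_pos (w_pos σ y x)]
    calc w σ y x ≤ Real.exp (‖y‖ ^ 2 / (2 * σ ^ 2)) := w_le hσ y x
      _ ≤ Real.exp ((‖y₀‖ + 1) ^ 2 / (2 * σ ^ 2)) := by
          apply Real.exp_le_exp.mpr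
          apply (div_le_div_iff_of_pos_right (by positivity)).mpr
          nlinarith [norm_nonneg y, norm_nonneg y₀, hy]
  · exact integrable_const _
  · exact Filter.Eventually.of_forall fun x => (continuous_w_y σ x).continuousAt

lemma continuous_M {σ : ℝ} (hσ : 0 < σ) : Continuous (M σ P) := by
  rw [continuous_iff_continuousAt]
  intro y₀
  apply continuousAt_of_dominated
    (bound := fun _ => Real.exp ((‖y₀‖ + 1 + σ ^ 2) ^ 2 / (2 * σ ^ 2)))
  · exact Filter.Eventually.of_forall fun y =>
      ((continuous_w_x σ y).smul continuous_id).aestronglyMeasurable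
  · have hev : ∀ᶠ y' : EuclideanSpace ℝ (Fin n) in nhds y₀, ‖y'‖ < ‖y₀‖ + 1 :=
      (continuous_norm.continuousAt (x := y₀)).eventually_lt_const (by linarith)
    filter_upwards [hev] with y hy
    refine Filter.Eventually.of_forall fun x => ?_
    rw [norm_smul, Real.norm_eq_abs, abs_of_pos (w_pos σ y x)]
    calc w σ y x * ‖x‖ ≤ Real.exp ((‖y‖ + σ ^ 2) ^ 2 / (2 * σ ^ 2)) := w_mul_norm_le hσ y x
      _ ≤ Real.exp ((‖y₀‖ + 1 + σ ^ 2) ^ 2 / (2 * σ ^ 2)) := by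
          apply Real.exp_le_exp.mpr
          apply (div_le_div_iff_of_pos_right (by positivity)).mpr
          nlinarith [norm_nonneg y, norm_nonneg y₀, hy, sq_nonneg σ, hσ]
  · exact integrable_const _
  · refine Filter.Eventually.of_forall fun x => ?_
    exact ((continuous_w_y σ x).smul continuous_const).continuousAt

lemma continuous_fP {σ : ℝ} (hσ : 0 < σ) : Continuous (fP σ P) :=
  ((continuous_S P hσ).inv₀ fun y => (S_pos P hσ y).ne').smul (continuous_M P hσ)

lemma eq_fP_of_subgrad {σ : ℝ} (hσ : 0 < σ) {y x : EuclideanSpace ℝ (Fin n)}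
    (h : ∀ z, ⟪x, z - y⟫ ≤ psi σ P z - psi σ P y) : x = fP σ P y := by
  have key : ∀ v : EuclideanSpace ℝ (Fin n), ⟪x - fP σ P y, v⟫ ≤ 0 := by
    intro v
    have h1 : ∀ t : ℝ, 0 < t → ⟪x - fP σ P (y + t • v), v⟫ ≤ 0 := by
      intro t ht
      have ha := h (y + t • v)
      rw [add_sub_cancel_left] at ha
      have hb := subgrad P hσ (y + t • v) y
      have hyy : y - (y + t • v) = -(t • v) := by abel
      rw [hyy, inner_neg_right] at hb
      have hsum : ⟪x, t • v⟫ - ⟪fP σ P (y + t • v), t • v⟫ ≤ 0 := by linarith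
      rw [real_inner_smul_right, real_inner_smul_right] at hsum
      rw [inner_sub_left]
      nlinarith [hsum]
    have h2 : Filter.Tendsto (fun t : ℝ => ⟪x - fP σ P (y + t • v), v⟫)
        (nhdsWithin 0 (Set.Ioi 0)) (nhds ⟪x - fP σ P y, v⟫) := by
      have hc : Continuous (fun t : ℝ => ⟪x - fP σ P (y + t • v), v⟫) :=
        (continuous_const.sub ((continuous_fP P hσ).comp
          (continuous_const.add (continuous_id.smul continuous_const)))).inner continuous_const
      have h3 := hc.continuousAt (x := 0)
      rw [ContinuousAt] at h3
      simp only [zero_smul, add_zero] at h3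
      exact h3.mono_left nhdsWithin_le_nhds
    exact le_of_tendsto h2 (eventually_nhdsWithin_of_forall fun t ht => h1 t ht)
  have h0 := key (x - fP σ P y)
  exact sub_eq_zero.mp (real_inner_self_nonpos.mp h0)

end GaussAux

/-- For additive white Gaussian denoising with a non-degenerate prior `P` on `ℝⁿ` (no affine
hyperplane has full mass), the MMSE estimator is injective and there is a penalty `φ` such that
`f_P(y)` is the unique minimizer of `x ↦ (1/2)‖y − x‖² + φ(x)` for every `y`. -/
theorem stmt3 (n : ℕ) (hn : 1 ≤ n) (σ : ℝ) (hσ : 0 < σ)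
    (P : Measure (EuclideanSpace ℝ (Fin n))) [IsProbabilityMeasure P]
    (hnd : ∀ v : EuclideanSpace ℝ (Fin n), v ≠ 0 → ∀ d : ℝ, P {x | ⟪x, v⟫ = d} < 1) :
    Function.Injective (gaussMean n σ P) ∧
    (∃ φ : EuclideanSpace ℝ (Fin n) → EReal, ∀ y x : EuclideanSpace ℝ (Fin n),
      x ≠ gaussMean n σ P y →
      ((2⁻¹ * ‖y - gaussMean n σ P y‖ ^ 2 : ℝ) : EReal) + φ (gaussMean n σ P y) <
        ((2⁻¹ * ‖y - x‖ ^ 2 : ℝ) : EReal) + φ x) := by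
  have hg : gaussMean n σ P = GaussAux.fP σ P := funext fun y => GaussAux.gaussMean_eq P hσ y
  constructor
  · intro y z hyz2
    by_contra hne
    rw [hg] at hyz2
    have hpos := GaussAux.strict_mono_fP P hσ hnd hne
    rw [← hyz2, sub_self, inner_zero_left] at hpos
    exact lt_irrefl 0 hpos
  · refine ⟨fun x => ⨆ z : EuclideanSpace ℝ (Fin n),
      (((⟪x, z⟫ - GaussAux.psi σ P z - 2⁻¹ * ‖x‖ ^ 2 : ℝ)) : EReal), ?_⟩
    intro y x hx
    rw [hg] at hx ⊢
    set m := GaussAux.fP σ P y with hm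
    have hφm : (⨆ z : EuclideanSpace ℝ (Fin n),
        (((⟪m, z⟫ - GaussAux.psi σ P z - 2⁻¹ * ‖m‖ ^ 2 : ℝ)) : EReal))
        = ((⟪m, y⟫ - GaussAux.psi σ P y - 2⁻¹ * ‖m‖ ^ 2 : ℝ) : EReal) := by
      apply le_antisymm
      · apply iSup_le
        intro z
        apply EReal.coe_le_coe_iff.mpr
        have hsg := GaussAux.subgrad P hσ y z
        rw [inner_sub_right] at hsg
        rw [hm]
        linarith
      · exact le_iSup (fun z : EuclideanSpace ℝ (Fin n) =>
          (((⟪m, z⟫ - GaussAux.psi σ P z - 2⁻¹ * ‖m‖ ^ 2 : ℝ)) : EReal)) y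
    beta_reduce
    rw [hφm]
    have hz0 : ∃ z₀ : EuclideanSpace ℝ (Fin n),
        GaussAux.psi σ P z₀ - GaussAux.psi σ P y < ⟪x, z₀ - y⟫ := by
      by_contra hcon
      push_neg at hcon
      exact hx (GaussAux.eq_fP_of_subgrad P hσ hcon)
    obtain ⟨z₀, hz₀⟩ := hz0
    have hL : ((2⁻¹ * ‖y - m‖ ^ 2 : ℝ) : EReal)
        + ((⟪m, y⟫ - GaussAux.psi σ P y - 2⁻¹ * ‖m‖ ^ 2 : ℝ) : EReal)
        = ((2⁻¹ * ‖y‖ ^ 2 - GaussAux.psi σ P y : ℝ) : EReal) := by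
      rw [← EReal.coe_add]
      congr 1
      have hnm : ‖y - m‖ ^ 2 = ‖y‖ ^ 2 - 2 * ⟪y, m⟫ + ‖m‖ ^ 2 := norm_sub_sq_real y m
      have hmy : ⟪m, y⟫ = ⟪y, m⟫ := real_inner_comm y m
      linarith [hnm, hmy]
    rw [hL]
    have hR : ((2⁻¹ * ‖y‖ ^ 2 - GaussAux.psi σ P y : ℝ) : EReal)
        < ((2⁻¹ * ‖y - x‖ ^ 2 : ℝ) : EReal)
          + ((⟪x, z₀⟫ - GaussAux.psi σ P z₀ - 2⁻¹ * ‖x‖ ^ 2 : ℝ) : EReal) := by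
      rw [← EReal.coe_add, EReal.coe_lt_coe_iff]
      have hnx : ‖y - x‖ ^ 2 = ‖y‖ ^ 2 - 2 * ⟪y, x⟫ + ‖x‖ ^ 2 := norm_sub_sq_real y x
      rw [inner_sub_right] at hz₀
      have hxy : ⟪x, y⟫ = ⟪y, x⟫ := real_inner_comm y x
      linarith [hz₀, hnx, hxy]
    refine hR.trans_le ?_
    apply add_le_add le_rfl
    exact le_iSup (fun z : EuclideanSpace ℝ (Fin n) =>
      (((⟪x, z⟫ - GaussAux.psi σ P z - 2⁻¹ * ‖x‖ ^ 2 : ℝ)) : EReal)) z₀
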